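/- Let jobs have processing times in (0,1] and consider a schedule on m machines with makespan at most 1. Call a job 'mid' if its processing time lies in (1/3 + 2ε', 2/3 + 4ε'] and 'big' if its processing time exceeds 2/3 + 4ε', where 0 < ε' ≤ 1/8. Then each machine contains at most 2 mid jobs and no machine contains both a big job and any other mid or big job; consequently, if n₁ is the number of mid jobs and n₂ the number of big jobs, then ⌈n₁/2⌉ + n₂ ≤ m. -/

import Mathlib

theorem stmt8 (ε' : ℝ) (h1 : 0 < ε') (h2 : ε' ≤ 1 / 8)
    (m n : ℕ) (p : Fin n → ℝ) (hp : ∀ t, 0 < p t ∧ p t ≤ 1)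
    (f : Fin n → Fin m)
    (hmakespan : ∀ j : Fin m, ∑ t ∈ Finset.univ.filter (fun t => f t = j), p t ≤ 1) :
    (∀ j : Fin m,
        (Finset.univ.filter
          (fun t => f t = j ∧ 1 / 3 + 2 * ε' < p t ∧ p t ≤ 2 / 3 + 4 * ε')).card ≤ 2) ∧
    (∀ j : Fin m, ∀ t t' : Fin n, f t = j → f t' = j → 2 / 3 + 4 * ε' < p t → t ≠ t' →
        ¬ (1 / 3 + 2 * ε' < p t')) ∧
    ((Finset.univ.filter
        (fun t => 1 / 3 + 2 * ε' < p t ∧ p t ≤ 2 / 3 + 4 * ε')).card + 1) / 2 +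
      (Finset.univ.filter (fun t => 2 / 3 + 4 * ε' < p t)).card ≤ m := by
  have hpos : ∀ t, 0 ≤ p t := fun t => (hp t).1.le
  have hsum : ∀ (j : Fin m) (s : Finset (Fin n)), (∀ t ∈ s, f t = j) →
      ∑ t ∈ s, p t ≤ 1 := by
    intro j s hs
    refine le_trans (Finset.sum_le_sum_of_subset_of_nonneg ?_ fun t _ _ => hpos t)
      (hmakespan j)
    intro t ht
    simp [Finset.mem_filter, hs t ht]
  have part1 : ∀ j : Fin m,
      (Finset.univ.filter
        (fun t => f t = j ∧ 1 / 3 + 2 * ε' < p t ∧ p t ≤ 2 / 3 + 4 * ε')).card ≤ 2 := by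
    intro j
    by_contra h
    push_neg at h
    obtain ⟨u, hu, hcard⟩ := Finset.exists_subset_card_eq h
    have hsub : ∀ t ∈ u, f t = j ∧ 1 / 3 + 2 * ε' < p t ∧ p t ≤ 2 / 3 + 4 * ε' := by
      intro t ht
      have := hu ht
      simpa using this
    have hle : ∑ t ∈ u, p t ≤ 1 := hsum j u (fun t ht => (hsub t ht).1)
    have hge : u.card • (1 / 3 + 2 * ε') ≤ ∑ t ∈ u, p t :=
      Finset.card_nsmul_le_sum u p _ (fun t ht => (hsub t ht).2.1.le)
    rw [hcard] at hge
    rw [nsmul_eq_mul] at hge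
    push_cast at hge
    linarith
  have part2 : ∀ j : Fin m, ∀ t t' : Fin n, f t = j → f t' = j →
      2 / 3 + 4 * ε' < p t → t ≠ t' → ¬ (1 / 3 + 2 * ε' < p t') := by
    intro j t t' htj ht'j hbig hne hmid
    have hle : ∑ x ∈ ({t, t'} : Finset (Fin n)), p x ≤ 1 := by
      apply hsum j
      intro x hx
      rcases Finset.mem_insert.mp hx with h | h
      · rw [h]; exact htj
      · rw [Finset.mem_singleton.mp h]; exact ht'j
    rw [Finset.sum_pair hne] at hle
    linarith
  refine ⟨part1, part2, ?_⟩
  set M := Finset.univ.filter (fun t => 1 / 3 + 2 * ε' < p t ∧ p t ≤ 2 / 3 + 4 * ε') with hM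
  set B := Finset.univ.filter (fun t => 2 / 3 + 4 * ε' < p t) with hB
  have hMcard : M.card = ∑ j : Fin m, (M.filter (fun t => f t = j)).card :=
    Finset.card_eq_sum_card_fiberwise (fun x _ => Finset.mem_univ (f x))
  have hBcard : B.card = ∑ j : Fin m, (B.filter (fun t => f t = j)).card :=
    Finset.card_eq_sum_card_fiberwise (fun x _ => Finset.mem_univ (f x))
  have key : ∀ j : Fin m,
      (M.filter (fun t => f t = j)).card + 2 * (B.filter (fun t => f t = j)).card ≤ 2 := by
    intro j
    by_cases hBj : (B.filter (fun t => f t = j)) = ∅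
    · rw [hBj]
      simp only [Finset.card_empty, Nat.mul_zero, Nat.add_zero]
      have : M.filter (fun t => f t = j) =
          Finset.univ.filter
            (fun t => f t = j ∧ 1 / 3 + 2 * ε' < p t ∧ p t ≤ 2 / 3 + 4 * ε') := by
        rw [hM, Finset.filter_filter]
        apply Finset.filter_congr
        intro x _
        tauto
      rw [this]
      exact part1 j
    · obtain ⟨t, ht⟩ := Finset.nonempty_iff_ne_empty.mpr hBj
      simp only [hB, Finset.mem_filter, Finset.mem_univ, true_and] at ht
      obtain ⟨htbig, htj⟩ := ht
      have hBsub : B.filter (fun t => f t = j) ⊆ {t} := by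
        intro x hx
        simp only [hB, Finset.mem_filter, Finset.mem_univ, true_and] at hx
        obtain ⟨hxbig, hxj⟩ := hx
        by_contra hxt
        rw [Finset.mem_singleton] at hxt
        exact part2 j t x htj hxj htbig (fun h => hxt h.symm) (by linarith)
      have hMempty : M.filter (fun t => f t = j) = ∅ := by
        rw [Finset.eq_empty_iff_forall_notMem]
        intro x hx
        simp only [hM, Finset.mem_filter, Finset.mem_univ, true_and] at hx
        obtain ⟨⟨hx1, hx2⟩, hxj⟩ := hx
        have hne : t ≠ x := by
          intro h
          rw [h] at htbig
          linarith
        exact part2 j t x htj hxj htbig hne hx1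
      rw [hMempty]
      have := Finset.card_le_card hBsub
      simp only [Finset.card_singleton] at this
      simp only [Finset.card_empty]
      omega
  have htotal : M.card + 2 * B.card ≤ 2 * m := by
    rw [hMcard, hBcard, Finset.mul_sum]
    calc ∑ j : Fin m, (M.filter (fun t => f t = j)).card +
          ∑ j : Fin m, 2 * (B.filter (fun t => f t = j)).card
        = ∑ j : Fin m, ((M.filter (fun t => f t = j)).card +
            2 * (B.filter (fun t => f t = j)).card) := by
          rw [Finset.sum_add_distrib]
      _ ≤ ∑ _j : Fin m, 2 := Finset.sum_le_sum (fun j _ => key j)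
      _ = 2 * m := by simp [Finset.sum_const, Finset.card_univ, Nat.mul_comm]
  omega
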